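/- (Watson's Lemma, first order.) Suppose f : (0,∞) → ℂ is absolutely integrable, f(τ) = τ^λ g(τ) with Re λ > −1, g continuous at 0 and g differentiable with bounded derivative near 0. Then the Laplace transform F(u) = ∫_0^∞ f(τ) e^{−uτ} dτ satisfies F(u) = g(0) Γ(1+λ) u^{−λ−1} + O(u^{−λ−2}) as u → +∞ along the real axis. -/

import Mathlib

open MeasureTheory Filter Set
open Topology


lemma watson_int_rpow_exp {p u : ℝ} (hp : -1 < p) (hu : 0 < u) :
    IntegrableOn (fun t : ℝ => t ^ p * Real.exp (-(u * t))) (Ioi 0) := by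
  have base : IntegrableOn (fun t : ℝ => t ^ p * Real.exp (-t)) (Ioi 0) := by
    have h := Real.GammaIntegral_convergent (by linarith : (0:ℝ) < p + 1)
    simpa [mul_comm, add_sub_cancel_right] using h
  have comp : IntegrableOn (fun t : ℝ => (u * t) ^ p * Real.exp (-(u * t))) (Ioi 0) :=
    (integrableOn_Ioi_comp_mul_left_iff
      (fun t : ℝ => t ^ p * Real.exp (-t)) 0 hu).mpr (by simpa using base)
  have h2 := comp.const_mul ((u : ℝ) ^ p)⁻¹
  apply IntegrableOn.congr_fun h2 ?_ measurableSet_Ioi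
  intro t ht
  rw [mem_Ioi] at ht
  simp only
  rw [Real.mul_rpow hu.le ht.le]
  field_simp [(Real.rpow_pos_of_pos hu p).ne']

lemma watson_norm_aux {lam : ℂ} {u τ : ℝ} (hτ : 0 < τ) :
    ‖(τ:ℂ) ^ lam * Complex.exp (-(u:ℂ) * τ)‖ = τ ^ lam.re * Real.exp (-(u * τ)) := by
  rw [norm_mul,
    Complex.norm_cpow_eq_rpow_re_of_pos hτ, Complex.norm_exp]
  congr 2
  simp

lemma watson_int_cpow_exp {lam : ℂ} {u : ℝ} (hlam : -1 < lam.re) (hu : 0 < u) :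
    IntegrableOn (fun t : ℝ => (t:ℂ) ^ lam * Complex.exp (-(u:ℂ) * t)) (Ioi 0) := by
  refine Integrable.mono' (watson_int_rpow_exp hlam hu) ?_ ?_
  · refine ContinuousOn.aestronglyMeasurable ?_ measurableSet_Ioi
    refine ContinuousOn.mul ?_ (Continuous.continuousOn (by continuity))
    refine continuousOn_of_forall_continuousAt fun x hx => ?_
    exact (continuousAt_cpow_const <| Complex.ofReal_mem_slitPlane.2 hx).comp
      Complex.continuous_ofReal.continuousAt
  · refine (ae_restrict_iff' measurableSet_Ioi).mpr (Eventually.of_forall fun t ht => ?_)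
    rw [watson_norm_aux ht]

lemma watson_integral_id {lam : ℂ} {u : ℝ} (hlam : -1 < lam.re) (hu : 0 < u) :
    ∫ t in Ioi (0:ℝ), (t:ℂ) ^ lam * Complex.exp (-(u:ℂ) * t)
      = Complex.Gamma (1 + lam) * (u:ℂ) ^ (-lam - 1) := by
  have h := Complex.integral_cpow_mul_exp_neg_mul_Ioi (a := 1 + lam) (r := u)
    (by simp [Complex.add_re]; linarith) hu
  simp only [add_sub_cancel_left] at h
  have h2 : ∫ t in Ioi (0:ℝ), (t:ℂ) ^ lam * Complex.exp (-(u:ℂ) * t)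
      = ∫ t in Ioi (0:ℝ), (t:ℂ) ^ lam * Complex.exp (-((u:ℂ) * t)) := by
    refine setIntegral_congr_fun measurableSet_Ioi fun t ht => ?_
    ring_nf
  have harg : ((u:ℂ)).arg ≠ Real.pi := by
    rw [Complex.arg_ofReal_of_nonneg hu.le]
    exact Ne.symm Real.pi_ne_zero
  have h3 : (1 / (u:ℂ)) ^ (1 + lam) = (u:ℂ) ^ (-lam - 1) := by
    rw [one_div, Complex.inv_cpow _ _ harg, ← Complex.cpow_neg]
    congr 1
    ring
  rw [h2, h, h3]
  ring


lemma watson_g_bound {g : ℝ → ℂ} {δ M : ℝ} (hg : ContinuousAt g 0) (hMnn : 0 ≤ M)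
    (hd : ∀ τ ∈ Ioo (0:ℝ) δ, DifferentiableAt ℝ g τ ∧ ‖deriv g τ‖ ≤ M) :
    ∀ τ ∈ Ioo (0:ℝ) δ, ‖g τ - g 0‖ ≤ M * τ := by
  intro τ hτ
  have key : ∀ y ∈ Ioo (0:ℝ) δ, ‖g τ - g y‖ ≤ M * ‖τ - y‖ := fun y hy =>
    Convex.norm_image_sub_le_of_norm_deriv_le (fun x hx => (hd x hx).1)
      (fun x hx => (hd x hx).2) (convex_Ioo 0 δ) hy hτ
  have hlim : Tendsto (fun y => ‖g τ - g y‖) (𝓝[>] (0:ℝ)) (𝓝 ‖g τ - g 0‖) :=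
    (tendsto_const_nhds.sub (hg.tendsto.mono_left nhdsWithin_le_nhds)).norm
  refine le_of_tendsto hlim ?_
  filter_upwards [Ioo_mem_nhdsGT_of_mem (⟨le_refl (0:ℝ), hτ.1⟩ : (0:ℝ) ∈ Ico 0 τ)] with y hy
  calc ‖g τ - g y‖ ≤ M * ‖τ - y‖ := key y ⟨hy.1, hy.2.trans hτ.2⟩
    _ ≤ M * τ := by
        refine mul_le_mul_of_nonneg_left ?_ hMnn
        rw [Real.norm_eq_abs, abs_of_nonneg (by linarith [hy.1, hy.2] : (0:ℝ) ≤ τ - y)]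
        linarith [hy.1]

/-- Watson's Lemma, first order: if `f(τ) = τ^λ g(τ)` with `Re λ > −1`, `f`
absolutely integrable on `(0,∞)`, `g` continuous at `0` and differentiable with
bounded derivative near `0`, then
`∫_0^∞ f(τ) e^{−uτ} dτ = g(0) Γ(1+λ) u^{−λ−1} + O(u^{−λ−2})` as `u → +∞`. -/
theorem stmt_9 (f g : ℝ → ℂ) (lam : ℂ) (hlam : -1 < lam.re)
    (hf : IntegrableOn f (Ioi 0))
    (hfg : ∀ τ : ℝ, 0 < τ → f τ = (τ : ℂ) ^ lam * g τ)
    (hg : ContinuousAt g 0)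
    (hg' : ∃ δ > (0:ℝ), ∃ M : ℝ, ∀ τ ∈ Ioo (0:ℝ) δ,
        DifferentiableAt ℝ g τ ∧ ‖deriv g τ‖ ≤ M) :
    ∃ C : ℝ, ∀ᶠ u : ℝ in atTop,
      ‖(∫ τ in Ioi (0:ℝ), f τ * Complex.exp (-(u : ℂ) * τ)) -
          g 0 * Complex.Gamma (1 + lam) * (u : ℂ) ^ (-lam - 1)‖ ≤
        C * u ^ (-lam.re - 2) := by
  obtain ⟨δ, hδ, M₀, hM₀⟩ := hg'
  set r := lam.re with hr
  set M : ℝ := max M₀ 0 with hMdef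
  have hMnn : 0 ≤ M := le_max_right _ _
  have hd : ∀ τ ∈ Ioo (0:ℝ) δ, DifferentiableAt ℝ g τ ∧ ‖deriv g τ‖ ≤ M :=
    fun τ hτ => ⟨(hM₀ τ hτ).1, le_trans (hM₀ τ hτ).2 (le_max_left _ _)⟩
  have hgb := watson_g_bound hg hMnn hd
  set L : ℝ := ∫ τ in Ioi (0:ℝ), ‖f τ‖ with hLdef
  have hLnn : 0 ≤ L := integral_nonneg fun _ => norm_nonneg _
  have hΓ1 : 0 < Real.Gamma (r + 1) := Real.Gamma_pos_of_pos (by linarith)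
  set K : ℝ := L + ‖g 0‖ * Real.Gamma (r + 1) with hKdef
  have hKnn : 0 ≤ K := by positivity
  -- base integrand t^r e^{-t}
  have qint : IntegrableOn (fun t : ℝ => t ^ r * Real.exp (-t)) (Ioi 0) := by
    have := watson_int_rpow_exp hlam one_pos
    simpa using this
  have qval : ∫ t in Ioi (0:ℝ), t ^ r * Real.exp (-t) = Real.Gamma (r + 1) := by
    have h := Real.integral_rpow_mul_exp_neg_mul_Ioi (a := r + 1) (by linarith) one_pos
    rw [show r + 1 - 1 = r from by ring] at h
    simpa using h
  -- eventual exponential smallness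
  have hev : ∀ᶠ u : ℝ in atTop, K * Real.exp (-(u - 1) * δ) ≤ u ^ (-r - 2) := by
    have h0 : Tendsto (fun x : ℝ => (K * Real.exp δ) * (x ^ (r + 2) * Real.exp (-δ * x)))
        atTop (𝓝 ((K * Real.exp δ) * 0)) :=
      (tendsto_rpow_mul_exp_neg_mul_atTop_nhds_zero (r + 2) δ hδ).const_mul _
    rw [mul_zero] at h0
    filter_upwards [h0.eventually (Filter.Tendsto.eventually_lt_const one_pos tendsto_id
        |>.mono fun _ h => h), eventually_gt_atTop 0] with u hlt hu0
    have hp : (0:ℝ) < u ^ (r + 2) := Real.rpow_pos_of_pos hu0 _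
    have hexp : Real.exp (-(u - 1) * δ) = Real.exp δ * Real.exp (-δ * u) := by
      rw [← Real.exp_add]; ring_nf
    rw [show -r - 2 = -(r + 2) from by ring, Real.rpow_neg hu0.le, hexp,
      inv_eq_one_div, le_div_iff₀ hp]
    have heq : K * (Real.exp δ * Real.exp (-δ * u)) * u ^ (r + 2)
        = (K * Real.exp δ) * (u ^ (r + 2) * Real.exp (-δ * u)) := by ring
    rw [heq]
    exact hlt.le
  refine ⟨M * Real.Gamma (r + 2) + 1, ?_⟩
  filter_upwards [eventually_ge_atTop 1, hev, eventually_gt_atTop 0] with u hu1 hevu hu0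
  set E : ℝ → ℂ := fun τ => Complex.exp (-(u:ℂ) * τ) with hEdef
  set p : ℝ → ℂ := fun τ => (τ:ℂ) ^ lam * E τ with hpdef
  have hP : IntegrableOn p (Ioi 0) := watson_int_cpow_exp hlam hu0
  have hEnorm : ∀ τ : ℝ, ‖E τ‖ = Real.exp (-(u * τ)) := by
    intro τ
    rw [hEdef]
    simp only [Complex.norm_exp]
    congr 1
    simp
  have hFE : IntegrableOn (fun τ => f τ * E τ) (Ioi 0) := by
    refine Integrable.mono' hf.norm ?_ ?_
    · exact hf.aestronglyMeasurable.mul (Continuous.aestronglyMeasurable (by continuity))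
    · refine (ae_restrict_iff' measurableSet_Ioi).mpr (Eventually.of_forall fun τ hτ => ?_)
      rw [norm_mul, hEnorm]
      calc ‖f τ‖ * Real.exp (-(u * τ)) ≤ ‖f τ‖ * 1 := by
            refine mul_le_mul_of_nonneg_left ?_ (norm_nonneg _)
            exact Real.exp_le_one_iff.mpr (by nlinarith [le_of_lt (mem_Ioi.mp hτ)])
        _ = ‖f τ‖ := mul_one _
  have hsplit : ∀ h : ℝ → ℂ, IntegrableOn h (Ioi 0) →
      ∫ τ in Ioi (0:ℝ), h τ = (∫ τ in Ioo (0:ℝ) δ, h τ) + ∫ τ in Ioi δ, h τ := by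
    intro h hint
    rw [← Ioc_union_Ioi_eq_Ioi hδ.le,
      setIntegral_union Ioc_disjoint_Ioi_same measurableSet_Ioi
        (hint.mono_set Ioc_subset_Ioi_self) (hint.mono_set (Ioi_subset_Ioi hδ.le)),
      integral_Ioc_eq_integral_Ioo]
  -- the three pieces
  have hint1 : IntegrableOn (fun τ : ℝ => (τ:ℂ) ^ lam * g τ * E τ) (Ioo 0 δ) := by
    refine (hFE.mono_set Ioo_subset_Ioi_self).congr_fun (fun τ hτ => ?_) measurableSet_Ioo
    simp only [hfg τ hτ.1]
  have hint2 : IntegrableOn (fun τ : ℝ => (τ:ℂ) ^ lam * (g τ - g 0) * E τ) (Ioo 0 δ) := by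
    have h0 := hint1.sub ((hP.mono_set Ioo_subset_Ioi_self).const_mul (g 0))
    refine IntegrableOn.congr_fun h0 (fun τ hτ => ?_) measurableSet_Ioo
    simp only [Pi.sub_apply, hpdef]
    ring
  have key : (∫ τ in Ioi (0:ℝ), f τ * E τ) - g 0 * Complex.Gamma (1 + lam) * (u:ℂ) ^ (-lam - 1)
      = (∫ τ in Ioo (0:ℝ) δ, (τ:ℂ) ^ lam * (g τ - g 0) * E τ)
        + ((∫ τ in Ioi δ, f τ * E τ) - g 0 * ∫ τ in Ioi δ, p τ) := by
    have e1 := hsplit _ hFE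
    have e2 := hsplit _ hP
    have id0 : ∫ τ in Ioi (0:ℝ), p τ = Complex.Gamma (1 + lam) * (u:ℂ) ^ (-lam - 1) :=
      watson_integral_id hlam hu0
    have e3 : ∫ τ in Ioo (0:ℝ) δ, f τ * E τ = ∫ τ in Ioo (0:ℝ) δ, (τ:ℂ) ^ lam * g τ * E τ :=
      setIntegral_congr_fun measurableSet_Ioo fun τ hτ => by rw [hfg τ hτ.1]
    have e4 : (∫ τ in Ioo (0:ℝ) δ, (τ:ℂ) ^ lam * g τ * E τ)
        - g 0 * ∫ τ in Ioo (0:ℝ) δ, p τ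
        = ∫ τ in Ioo (0:ℝ) δ, (τ:ℂ) ^ lam * (g τ - g 0) * E τ := by
      rw [← integral_const_mul, ← integral_sub hint1
        ((hP.mono_set Ioo_subset_Ioi_self).const_mul (g 0))]
      refine setIntegral_congr_fun measurableSet_Ioo fun τ hτ => ?_
      simp only [hpdef]
      ring
    rw [e1, mul_assoc, ← id0, e2]
    rw [← e4, e3]
    ring
  rw [key]
  -- now bound the three terms
  have boundA : ‖∫ τ in Ioo (0:ℝ) δ, (τ:ℂ) ^ lam * (g τ - g 0) * E τ‖
      ≤ M * Real.Gamma (r + 2) * u ^ (-r - 2) := by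
    have hb : IntegrableOn (fun τ : ℝ => M * (τ ^ (r + 1) * Real.exp (-(u * τ)))) (Ioo 0 δ) :=
      ((watson_int_rpow_exp (by linarith : (-1:ℝ) < r + 1) hu0).mono_set
        Ioo_subset_Ioi_self).const_mul M
    have h1 : ‖∫ τ in Ioo (0:ℝ) δ, (τ:ℂ) ^ lam * (g τ - g 0) * E τ‖
        ≤ ∫ τ in Ioo (0:ℝ) δ, M * (τ ^ (r + 1) * Real.exp (-(u * τ))) := by
      refine norm_integral_le_of_norm_le hb ?_
      refine (ae_restrict_iff' measurableSet_Ioo).mpr (.of_forall fun τ hτ => ?_)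
      rw [norm_mul, norm_mul, hEnorm,
        Complex.norm_cpow_eq_rpow_re_of_pos hτ.1, ← hr]
      calc τ ^ r * ‖g τ - g 0‖ * Real.exp (-(u * τ))
          ≤ τ ^ r * (M * τ) * Real.exp (-(u * τ)) :=
            mul_le_mul_of_nonneg_right (mul_le_mul_of_nonneg_left (hgb τ hτ)
              (Real.rpow_nonneg hτ.1.le _)) (Real.exp_pos _).le
        _ = M * (τ ^ (r + 1) * Real.exp (-(u * τ))) := by
            rw [Real.rpow_add_one hτ.1.ne']; ring
    have h2 : ∫ τ in Ioo (0:ℝ) δ, M * (τ ^ (r + 1) * Real.exp (-(u * τ)))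
        ≤ M * ((1 / u) ^ (r + 2) * Real.Gamma (r + 2)) := by
      rw [integral_const_mul]
      refine mul_le_mul_of_nonneg_left ?_ hMnn
      have hmono := setIntegral_mono_set (s := Ioo 0 δ) (t := Ioi 0) (watson_int_rpow_exp (by linarith : (-1:ℝ) < r + 1) hu0)
        ((ae_restrict_iff' measurableSet_Ioi).mpr (.of_forall fun τ hτ =>
          mul_nonneg (Real.rpow_nonneg (le_of_lt hτ) _) (Real.exp_pos _).le))
        (HasSubset.Subset.eventuallyLE Ioo_subset_Ioi_self)
      refine hmono.trans_eq ?_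
      have h := Real.integral_rpow_mul_exp_neg_mul_Ioi (a := r + 2) (by linarith) hu0
      rw [show r + 2 - 1 = r + 1 from by ring] at h
      exact h
    have h3 : (1 / u : ℝ) ^ (r + 2) = u ^ (-r - 2) := by
      rw [one_div, Real.inv_rpow hu0.le, ← Real.rpow_neg hu0.le,
        show -(r + 2) = -r - 2 from by ring]
    refine (h1.trans h2).trans_eq ?_
    rw [h3]; ring
  have boundB : ‖∫ τ in Ioi δ, f τ * E τ‖ ≤ Real.exp (-(u - 1) * δ) * L := by
    have hb : IntegrableOn (fun τ : ℝ => Real.exp (-(u - 1) * δ) * ‖f τ‖) (Ioi δ) :=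
      ((hf.mono_set (Ioi_subset_Ioi hδ.le)).norm).const_mul _
    have h1 : ‖∫ τ in Ioi δ, f τ * E τ‖ ≤ ∫ τ in Ioi δ, Real.exp (-(u - 1) * δ) * ‖f τ‖ := by
      refine norm_integral_le_of_norm_le hb ?_
      refine (ae_restrict_iff' measurableSet_Ioi).mpr (.of_forall fun τ hτ => ?_)
      rw [mem_Ioi] at hτ
      rw [norm_mul, hEnorm, mul_comm (Real.exp _) ‖f τ‖]
      refine mul_le_mul_of_nonneg_left (Real.exp_le_exp.mpr ?_) (norm_nonneg _)
      nlinarith [mul_le_mul_of_nonneg_left hτ.le (sub_nonneg.mpr hu1), hδ.le, hδ.trans hτ]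
    have h2 : ∫ τ in Ioi δ, Real.exp (-(u - 1) * δ) * ‖f τ‖ ≤ Real.exp (-(u - 1) * δ) * L := by
      rw [integral_const_mul]
      refine mul_le_mul_of_nonneg_left ?_ (Real.exp_pos _).le
      exact setIntegral_mono_set (s := Ioi δ) (t := Ioi 0) hf.norm
        ((ae_restrict_iff' measurableSet_Ioi).mpr (.of_forall fun τ _ => norm_nonneg _))
        (HasSubset.Subset.eventuallyLE (Ioi_subset_Ioi hδ.le))
    exact h1.trans h2
  have boundC : ‖∫ τ in Ioi δ, p τ‖ ≤ Real.exp (-(u - 1) * δ) * Real.Gamma (r + 1) := by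
    have hb : IntegrableOn (fun τ : ℝ => Real.exp (-(u - 1) * δ) * (τ ^ r * Real.exp (-τ)))
        (Ioi δ) := (qint.mono_set (Ioi_subset_Ioi hδ.le)).const_mul _
    have h1 : ‖∫ τ in Ioi δ, p τ‖
        ≤ ∫ τ in Ioi δ, Real.exp (-(u - 1) * δ) * (τ ^ r * Real.exp (-τ)) := by
      refine norm_integral_le_of_norm_le hb ?_
      refine (ae_restrict_iff' measurableSet_Ioi).mpr (.of_forall fun τ hτ => ?_)
      rw [mem_Ioi] at hτ
      have hτ0 : 0 < τ := hδ.trans hτ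
      simp only [hpdef, hEdef]
      rw [watson_norm_aux hτ0, ← hr]
      have hexp : Real.exp (-(u * τ)) ≤ Real.exp (-(u - 1) * δ) * Real.exp (-τ) := by
        rw [← Real.exp_add]
        refine Real.exp_le_exp.mpr ?_
        nlinarith [mul_le_mul_of_nonneg_left hτ.le (sub_nonneg.mpr hu1), hδ.le, hτ0.le]
      calc τ ^ r * Real.exp (-(u * τ))
          ≤ τ ^ r * (Real.exp (-(u - 1) * δ) * Real.exp (-τ)) :=
            mul_le_mul_of_nonneg_left hexp (Real.rpow_nonneg hτ0.le _)
        _ = Real.exp (-(u - 1) * δ) * (τ ^ r * Real.exp (-τ)) := by ring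
    have h2 : ∫ τ in Ioi δ, Real.exp (-(u - 1) * δ) * (τ ^ r * Real.exp (-τ))
        ≤ Real.exp (-(u - 1) * δ) * Real.Gamma (r + 1) := by
      rw [integral_const_mul]
      refine mul_le_mul_of_nonneg_left ?_ (Real.exp_pos _).le
      refine (setIntegral_mono_set (s := Ioi δ) (t := Ioi 0) qint
        ((ae_restrict_iff' measurableSet_Ioi).mpr (.of_forall fun τ hτ =>
          mul_nonneg (Real.rpow_nonneg (le_of_lt hτ) _) (Real.exp_pos _).le))
        (HasSubset.Subset.eventuallyLE (Ioi_subset_Ioi hδ.le))).trans_eq qval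
    exact h1.trans h2
  calc ‖(∫ τ in Ioo (0:ℝ) δ, (τ:ℂ) ^ lam * (g τ - g 0) * E τ)
        + ((∫ τ in Ioi δ, f τ * E τ) - g 0 * ∫ τ in Ioi δ, p τ)‖
      ≤ ‖∫ τ in Ioo (0:ℝ) δ, (τ:ℂ) ^ lam * (g τ - g 0) * E τ‖
        + (‖∫ τ in Ioi δ, f τ * E τ‖ + ‖g 0‖ * ‖∫ τ in Ioi δ, p τ‖) := by
        refine (norm_add_le _ _).trans ?_
        gcongr
        exact (norm_sub_le _ _).trans (le_of_eq (by rw [norm_mul]))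
    _ ≤ M * Real.Gamma (r + 2) * u ^ (-r - 2)
        + (Real.exp (-(u - 1) * δ) * L + ‖g 0‖ * (Real.exp (-(u - 1) * δ) * Real.Gamma (r + 1))) := by
        gcongr
    _ = M * Real.Gamma (r + 2) * u ^ (-r - 2) + K * Real.exp (-(u - 1) * δ) := by
        rw [hKdef]; ring
    _ ≤ M * Real.Gamma (r + 2) * u ^ (-r - 2) + u ^ (-r - 2) := by linarith
    _ = (M * Real.Gamma (r + 2) + 1) * u ^ (-r - 2) := by ring
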